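/- For |q| < 1, f(−q) := ∑_{n=-∞}^{∞} (−1)^n q^{n(3n−1)/2} equals the infinite product ∏_{k=1}^{∞} (1 − q^k). -/

import Mathlib

open Finset Filter Complex Topology

namespace Pent

/-! ### Gaussian binomial machinery -/

noncomputable def b (Q : ℂ) : ℕ → ℕ → ℂ
  | 0, 0 => 1
  | 0, _+1 => 0
  | _+1, 0 => 1
  | N+1, s+1 => b Q N (s+1) + Q^(N-s) * b Q N s

@[simp] lemma b_zero_right (Q : ℂ) (N : ℕ) : b Q N 0 = 1 := by cases N <;> rfl

lemma b_eq_zero (Q : ℂ) {N s : ℕ} (h : N < s) : b Q N s = 0 := by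
  induction N generalizing s with
  | zero => cases s with | zero => omega | succ s => rfl
  | succ N ih =>
    cases s with
    | zero => omega
    | succ s => rw [b, ih (by omega), ih (by omega), mul_zero, add_zero]

lemma tri (s : ℕ) : (s+1)*s/2 = s*(s-1)/2 + s := by
  cases s with
  | zero => rfl
  | succ s =>
    have h : (s+1+1)*(s+1) = (s+1)*s + 2*(s+1) := by ring
    have e : 2 ∣ (s+1)*s := (by simpa [mul_comm] using Nat.even_mul_succ_self s : Even ((s+1)*s)).two_dvd
    simp only [Nat.add_sub_cancel]
    omega

noncomputable def pq (Q : ℂ) (n : ℕ) : ℂ := ∏ i ∈ range n, (1 - Q^(i+1))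

@[simp] lemma pq_zero (Q : ℂ) : pq Q 0 = 1 := by simp [pq]
lemma pq_succ (Q : ℂ) (n : ℕ) : pq Q (n+1) = pq Q n * (1 - Q^(n+1)) := Finset.prod_range_succ _ _

/-- Cauchy binomial identity. -/
lemma cauchy (Q : ℂ) (N : ℕ) (y : ℂ) :
    ∏ k ∈ range N, (1 + y * Q^k) =
      ∑ s ∈ range (N+1), b Q N s * Q^(s*(s-1)/2) * y^s := by
  induction N with
  | zero => simp [b]
  | succ N ih =>
    rw [prod_range_succ, ih, Finset.sum_range_succ' (n := N+1)]
    have step : ∀ s ∈ range (N+1),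
        b Q (N+1) (s+1) * Q^((s+1)*((s+1)-1)/2) * y^(s+1)
          = b Q N (s+1) * Q^((s+1)*((s+1)-1)/2) * y^(s+1)
            + (b Q N s * Q^(s*(s-1)/2) * y^s) * (y * Q^N) := by
      intro s hs
      simp only [mem_range] at hs
      rw [show b Q (N+1) (s+1) = b Q N (s+1) + Q^(N-s) * b Q N s from rfl]
      simp only [Nat.add_sub_cancel, tri]
      have hpow : Q^(N-s) * Q^(s*(s-1)/2 + s) = Q^(s*(s-1)/2) * Q^N := by
        rw [← pow_add, ← pow_add]; congr 1; omega
      linear_combination (b Q N s * y^(s+1)) * hpow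
    rw [Finset.sum_congr rfl step, Finset.sum_add_distrib, ← Finset.sum_mul]
    have h1 : ∑ s ∈ range (N+1), b Q N (s+1) * Q^((s+1)*((s+1)-1)/2) * y^(s+1)
        = (∑ s ∈ range (N+1), b Q N s * Q^(s*(s-1)/2) * y^s) - 1 := by
      have := Finset.sum_range_succ' (fun s => b Q N s * Q^(s*(s-1)/2) * y^s) (N+1)
      rw [Finset.sum_range_succ (fun s => b Q N s * Q^(s*(s-1)/2) * y^s) (N+1),
        b_eq_zero Q (by omega)] at this
      simp only [Nat.add_sub_cancel] at this ⊢
      simp only [pow_zero, mul_one, b_zero_right, zero_mul, add_zero, Nat.zero_div] at this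
      linear_combination -this
    simp only [Nat.add_sub_cancel] at h1 ⊢
    rw [h1]
    simp only [b_zero_right, pow_zero, mul_one]
    ring

lemma b_mul_pq (Q : ℂ) : ∀ N s : ℕ, s ≤ N → b Q N s * (pq Q s * pq Q (N - s)) = pq Q N := by
  intro N
  induction N with
  | zero => intro s hs; interval_cases s; simp [b]
  | succ N ih =>
    intro s hs
    cases s with
    | zero => simp
    | succ s =>
      rw [show b Q (N+1) (s+1) = b Q N (s+1) + Q^(N-s) * b Q N s from rfl]
      rcases Nat.lt_or_ge s N with h | h
      · have i1 := ih (s+1) h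
        have i2 := ih s (by omega)
        have hsplit : Q^(N-s) * Q^(s+1) = Q^(N+1) := by rw [← pow_add]; congr 1; omega
        have e2 : pq Q (s+1) = pq Q s * (1 - Q^(s+1)) := pq_succ Q s
        have e4 : pq Q (N-s) = pq Q (N-(s+1)) * (1 - Q^(N-s)) := by
          rw [show N - s = (N-(s+1))+1 by omega, pq_succ, show N-(s+1)+1 = N-s by omega]
        have e1 : pq Q (N+1-(s+1)) = pq Q (N-(s+1)) * (1 - Q^(N-s)) := by
          rw [show N+1-(s+1) = (N-(s+1))+1 by omega, pq_succ, show N-(s+1)+1 = N-s by omega]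
        rw [e2] at i1
        rw [e4] at i2
        rw [pq_succ Q N, e1, e2]
        linear_combination (1-Q^(N-s))*i1 + Q^(N-s)*(1-Q^(s+1))*i2 - pq Q N * hsplit
      · have hs' : N = s := by omega
        subst hs'
        have iN := ih N le_rfl
        simp only [Nat.sub_self, pq_zero, mul_one] at iN ⊢
        rw [b_eq_zero Q (by omega), zero_add, pow_zero, one_mul, pq_succ]
        linear_combination (1-Q^(N+1)) * iN

/-! ### Telescoping product identity -/

lemma tri2 (n : ℕ) : (n+1)*(n+2)/2 = n*(n+1)/2 + (n+1) := by
  have e : 2 ∣ n*(n+1) := (Nat.even_mul_succ_self n).two_dvd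
  have h : (n+1)*(n+2) = n*(n+1) + 2*(n+1) := by ring
  omega

lemma prodR {q : ℂ} (hq0 : q ≠ 0) (n : ℕ) :
    pq (q^3) n * (q^3)^(n*(n+1)/2) * ((-(q^2))⁻¹)^n
      * ∏ k ∈ range (2*n), (1 + (-(q^2) * ((q^3)⁻¹)^n) * (q^3)^k)
    = ∏ k ∈ range (3*n), (1 - q^(k+1)) := by
  induction n with
  | zero => simp
  | succ n ih =>
    have hy : ∀ k : ℕ, 1 + (-(q^2) * ((q^3)⁻¹)^(n+1)) * (q^3)^(k+1)
        = 1 + (-(q^2) * ((q^3)⁻¹)^n) * (q^3)^k := by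
      intro k
      congr 1
      linear_combination (-(q^2) * ((q^3)⁻¹)^n * (q^3)^k) * (inv_mul_cancel₀ (pow_ne_zero 3 hq0))
    rw [show 2*(n+1) = (2*n+1)+1 by ring, prod_range_succ', prod_range_succ]
    simp only [hy]
    rw [show 3*(n+1) = ((3*n+1)+1)+1 by ring, prod_range_succ, prod_range_succ,
      prod_range_succ, ← ih, pq_succ, show n+1+1 = n+2 from rfl, tri2, pow_add,
      pow_succ ((-(q^2))⁻¹) n]
    have e1 : ((q^3)⁻¹)^n * (q^3)^(2*n) = (q^3)^n := by
      rw [two_mul, pow_add, ← mul_assoc, ← mul_pow, inv_mul_cancel₀ (pow_ne_zero 3 hq0), one_pow,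
        one_mul]
    have e2 : (q^3)^(n+1) * ((q^3)⁻¹)^(n+1) = 1 := by
      rw [← mul_pow, mul_inv_cancel₀ (pow_ne_zero 3 hq0), one_pow]
    have e3 : (-(q^2))⁻¹ * q^2 = -1 := by
      rw [inv_neg, neg_mul, inv_mul_cancel₀ (pow_ne_zero 2 hq0)]
    linear_combination pq (q^3) n * (q^3)^(n*(n+1)/2) * ((-(q^2))⁻¹)^n
      * (∏ k ∈ range (2*n), (1 + (-(q^2) * ((q^3)⁻¹)^n) * (q^3)^k)) * (1 - (q^3)^(n+1))
      * ((q^3)^(n+1) * (-(q^2))⁻¹ * (1 - q^2 * ((q^3)⁻¹)^(n+1)) * (-(q^2)) * e1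
        + (1 - q^(3*n+2)) * ((q^(3*n+1) - 1) * e3 - (-(q^2))⁻¹ * q^2 * e2))

/-! ### Pentagonal exponent -/

def en (j : ℤ) : ℕ := (j*(3*j+1)/2).toNat

lemma en_cast (j : ℤ) : 2 * ((en j : ℤ)) = j*(3*j+1) := by
  have hnn : 0 ≤ j*(3*j+1) := by
    rcases le_or_gt 0 j with h | h
    · exact mul_nonneg h (by linarith)
    · exact le_of_lt (mul_pos_of_neg_of_neg h (by omega))
  have he : 2 ∣ j*(3*j+1) := by
    rcases Int.even_or_odd j with ⟨k, hk⟩ | ⟨k, hk⟩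
    · exact ⟨k*(3*j+1), by rw [hk]; ring⟩
    · exact ⟨j*(3*k+2), by rw [hk]; ring⟩
  rw [en, Int.toNat_of_nonneg (Int.ediv_nonneg hnn (by norm_num))]
  exact Int.mul_ediv_cancel' he

lemma cast_half1 (n : ℕ) : 2 * ((n*(n+1)/2 : ℕ) : ℤ) = n*n + n := by
  have h : 2 * (n*(n+1)/2) = n*(n+1) := Nat.mul_div_cancel' (Nat.even_mul_succ_self n).two_dvd
  have h2 : 2 * (n*(n+1)/2) = n*n + n := by rw [h]; ring
  exact_mod_cast h2

lemma cast_half2 (s : ℕ) : 2 * ((s*(s-1)/2 : ℕ) : ℤ) = s*s - s := by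
  cases s with
  | zero => simp
  | succ t =>
    have h : 2 * ((t+1)*t/2) = (t+1)*t :=
      Nat.mul_div_cancel' (by simpa [mul_comm] using (Nat.even_mul_succ_self t).two_dvd)
    simp only [Nat.add_sub_cancel]
    have h2 : ((t:ℤ)+1)*((t:ℤ)+1) - ((t:ℤ)+1) = (((t+1)*t : ℕ) : ℤ) := by push_cast; ring
    push_cast
    rw [h2]
    exact_mod_cast h

lemma key (n s : ℕ) :
    3*(n*(n+1)/2) + 3*(s*(s-1)/2) + 2*s = en ((s:ℤ)-n) + 2*n + 3*(n*s) := by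
  have h1 := cast_half1 n
  have h2 := cast_half2 s
  have h3 := en_cast ((s:ℤ)-n)
  rw [← Nat.cast_inj (R := ℤ)]
  simp only [Nat.cast_add, Nat.cast_mul, Nat.cast_ofNat]
  linarith [h1, h2, h3]

lemma scal {q : ℂ} (hq0 : q ≠ 0) (n s : ℕ) :
    (q^3)^(n*(n+1)/2) * ((-(q^2))⁻¹)^n * ((q^3)^(s*(s-1)/2) * (-(q^2) * ((q^3)⁻¹)^n)^s)
      = (-1)^(s+n) * q^(en ((s:ℤ)-n)) := by
  rw [show -(q^2) * ((q^3)⁻¹)^n = -((q^2) * ((q^3)^n)⁻¹) by rw [inv_pow]; ring,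
    neg_pow, show (-(q^2))⁻¹ = -((q^2)⁻¹) by rw [neg_inv], neg_pow]
  rw [mul_pow (q^2), ← inv_pow, ← inv_pow, ← pow_mul ((q^3)⁻¹)]
  field_simp
  rw [← pow_mul q 3 (n*(n+1)/2), ← pow_mul q 3 (s*(s-1)/2), ← pow_mul q 2 s]
  have hq : q^(3*(n*(n+1)/2)) * q^(3*(s*(s-1)/2)) * q^(2*s)
      = q^(en ((s:ℤ)-n)) * q^(2*n) * q^(3*(n*s)) := by
    rw [← pow_add, ← pow_add, ← pow_add, ← pow_add, key]
  have hsign : (-1:ℂ)^n * (-1)^s = (-1)^(s+n) := by rw [← pow_add, add_comm]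
  have eU : (1/q^2)^n * q^(2*n) = 1 := by
    rw [pow_mul, ← mul_pow, one_div, inv_mul_cancel₀ (pow_ne_zero 2 hq0), one_pow]
  have eV : (1/q^3)^(n*s) * q^(3*(n*s)) = 1 := by
    rw [pow_mul q 3, ← mul_pow, one_div, inv_mul_cancel₀ (pow_ne_zero 3 hq0), one_pow]
  linear_combination ((-1:ℂ)^n * (-1)^s) * (1/q^2)^n * (1/q^3)^(n*s) * hq
    + ((-1:ℂ)^n * (-1)^s) * q^(en ((s:ℤ)-n)) * ((1/q^3)^(n*s) * q^(3*(n*s)) * eU + eV)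
    + q^(en ((s:ℤ)-n)) * hsign

/-- The master finite identity. -/
lemma Tn {q : ℂ} (hq0 : q ≠ 0) (n : ℕ) :
    ∏ k ∈ range (3*n), (1 - q^(k+1))
      = ∑ s ∈ range (2*n+1),
          pq (q^3) n * b (q^3) (2*n) s * ((-1)^(s+n) * q^(en ((s:ℤ)-n))) := by
  rw [← prodR hq0 n, cauchy (q^3) (2*n) _, mul_sum]
  refine Finset.sum_congr rfl fun s hs => ?_
  linear_combination (pq (q^3) n * b (q^3) (2*n) s) * scal hq0 n s

/-! ### Convergence of partial products -/

variable {c : ℂ}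

lemma factor_ne (hc : ‖c‖ < 1) (k : ℕ) : (1 : ℂ) - c^(k+1) ≠ 0 := by
  intro h
  have h1 : c^(k+1) = 1 := by linear_combination -h
  have h2 : ‖c^(k+1)‖ < 1 := by
    rw [norm_pow]
    exact pow_lt_one₀ (norm_nonneg c) hc (by omega)
  rw [h1, norm_one] at h2
  exact lt_irrefl _ h2

lemma pq_ne (hc : ‖c‖ < 1) (n : ℕ) : pq c n ≠ 0 :=
  Finset.prod_ne_zero_iff.2 fun i _ => factor_ne hc i

lemma summable_log (hc : ‖c‖ < 1) : Summable (fun k : ℕ => Complex.log (1 - c^(k+1))) := by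
  apply Summable.of_norm_bounded_eventually_nat (g := fun k => 3/2 * ‖c‖^(k+1))
  · exact ((summable_geometric_of_lt_one (norm_nonneg c) hc).mul_left (3/2*‖c‖)).congr
      (fun k => by rw [pow_succ']; ring)
  · have htend : Tendsto (fun k : ℕ => ‖c‖^(k+1)) atTop (𝓝 0) := by
      have := tendsto_pow_atTop_nhds_zero_of_lt_one (norm_nonneg c) hc
      exact this.comp (tendsto_add_atTop_nat 1)
    filter_upwards [htend.eventually_le_const (show (0:ℝ) < 1/2 by norm_num)] with k hk
    have h1 : ‖(-(c^(k+1)))‖ ≤ 1/2 := by rwa [norm_neg, norm_pow]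
    have hb := Complex.norm_log_one_add_half_le_self h1
    rw [show (1 : ℂ) + -(c^(k+1)) = 1 - c^(k+1) by ring] at hb
    simpa [norm_pow] using hb

noncomputable def Lc (c : ℂ) : ℂ := cexp (∑' k : ℕ, Complex.log (1 - c^(k+1)))

lemma Lc_ne : Lc c ≠ 0 := Complex.exp_ne_zero _

lemma hasProd_pq (hc : ‖c‖ < 1) : HasProd (fun k : ℕ => 1 - c^(k+1)) (Lc c) := by
  have hs := (summable_log hc).hasSum
  have h2 := hs.cexp
  have he : (fun k : ℕ => 1 - c^(k+1)) = (cexp ∘ fun k => Complex.log (1 - c^(k+1))) :=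
    funext fun k => (Complex.exp_log (factor_ne hc k)).symm
  rw [Lc, he]
  exact h2

lemma tendsto_pq (hc : ‖c‖ < 1) : Tendsto (fun n => pq c n) atTop (𝓝 (Lc c)) :=
  (hasProd_pq hc).tendsto_prod_nat

lemma tprod_eq_Lc (hc : ‖c‖ < 1) : ∏' k : ℕ, (1 - c^(k+1)) = Lc c :=
  (hasProd_pq hc).tprod_eq

lemma exists_B (hc : ‖c‖ < 1) : ∃ B : ℝ, 0 < B ∧ ∀ n, B ≤ ‖pq c n‖ := by
  have hL : 0 < ‖Lc c‖ := norm_pos_iff.2 Lc_ne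
  have hev := ((tendsto_pq hc).norm).eventually_const_le (half_lt_self hL)
  obtain ⟨N, hN⟩ := eventually_atTop.1 hev
  have hne : ((range (N+1)).image fun m => ‖pq c m‖).Nonempty := by simp
  refine ⟨min (‖Lc c‖/2) (((range (N+1)).image fun m => ‖pq c m‖).min' hne), ?_, ?_⟩
  · apply lt_min (by positivity)
    rw [Finset.lt_min'_iff]
    intro y hy
    simp only [mem_image, mem_range] at hy
    obtain ⟨m, _, rfl⟩ := hy
    exact norm_pos_iff.2 (pq_ne hc m)
  · intro n
    rcases le_or_gt n N with h | h
    · exact le_trans (min_le_right _ _)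
        (Finset.min'_le _ _ (Finset.mem_image.2 ⟨n, by simp [Nat.lt_succ_iff, h], rfl⟩))
    · exact le_trans (min_le_left _ _) (hN n (by omega))

lemma exists_A (hc : ‖c‖ < 1) : ∃ A : ℝ, ∀ n, ‖pq c n‖ ≤ A := by
  obtain ⟨A, hA⟩ := ((tendsto_pq hc).norm).bddAbove_range
  exact ⟨A, fun n => hA (Set.mem_range_self n)⟩

/-! ### Sign and index gymnastics -/

lemma neg_one_pow_inv (n : ℕ) : ((-1:ℂ)^n)⁻¹ = (-1)^n :=
  inv_eq_of_mul_eq_one_left (by rw [← pow_add]; exact Even.neg_one_pow ⟨n, rfl⟩)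

lemma zsign (s n : ℕ) : ((-1:ℂ))^((s:ℤ) - n) = (-1)^(s+n) := by
  rw [zpow_sub₀ (by norm_num : (-1:ℂ) ≠ 0), zpow_natCast, zpow_natCast,
    div_eq_mul_inv, neg_one_pow_inv, ← pow_add]

lemma neg_one_zpow_neg (j : ℤ) : ((-1:ℂ))^(-j) = (-1)^j := by
  rw [zpow_neg]
  refine inv_eq_of_mul_eq_one_left ?_
  rw [← zpow_add₀ (by norm_num : (-1:ℂ) ≠ 0), show j + j = 2*j by ring, zpow_mul]
  norm_num

lemma en_ge (j : ℤ) : (j.natAbs : ℤ) ≤ en j := by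
  have h := en_cast j
  rcases le_or_gt 0 j with hj | hj
  · have ha : (j.natAbs : ℤ) = j := Int.natAbs_of_nonneg hj
    have h4 : (0:ℤ) ≤ j*(3*j-1) := by
      rcases (by omega : j = 0 ∨ 1 ≤ j) with h0 | h1
      · simp [h0]
      · exact mul_nonneg (by omega) (by omega)
    nlinarith [h, h4]
  · have ha : (j.natAbs : ℤ) = -j := by omega
    have h4 : (0:ℤ) ≤ 3*(-j)*(-(j+1)) := mul_nonneg (by omega) (by omega)
    nlinarith [h, h4]


lemma summable_bound {r C : ℝ} (hr0 : 0 ≤ r) (hr : r < 1) :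
    Summable (fun j : ℤ => C * r^(en j)) := by
  apply Summable.mul_left
  apply Summable.of_nonneg_of_le (fun j => pow_nonneg hr0 _)
    (fun j => pow_le_pow_of_le_one hr0 hr.le (by exact_mod_cast en_ge j))
  apply Summable.of_nat_of_neg
  · exact (summable_geometric_of_lt_one hr0 hr).congr (fun n => by simp)
  · exact (summable_geometric_of_lt_one hr0 hr).congr (fun n => by simp)

lemma fC_eq_tsum_g (q : ℂ) :
    (∑' n : ℤ, (-1 : ℂ) ^ n * q ^ (n * (3 * n - 1) / 2).toNat)
      = ∑' j : ℤ, (-1 : ℂ)^j * q^(en j) := by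
  rw [← (Equiv.neg ℤ).tsum_eq (fun j => (-1 : ℂ)^j * q^(en j))]
  refine tsum_congr fun m => ?_
  simp only [Equiv.neg_apply]
  rw [neg_one_zpow_neg]
  congr 2
  rw [en]
  congr 1
  congr 1
  ring

theorem main {q : ℂ} (hq : ‖q‖ < 1) (hq0 : q ≠ 0) :
    (∑' n : ℤ, (-1 : ℂ) ^ n * q ^ (n * (3 * n - 1) / 2).toNat)
      = ∏' k : ℕ, (1 - q ^ (k + 1)) := by
  have hQ : ‖q^3‖ < 1 := by
    rw [norm_pow]; exact pow_lt_one₀ (norm_nonneg q) hq (by omega)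
  obtain ⟨A, hA⟩ := exists_A hQ
  obtain ⟨B, hB0, hB⟩ := exists_B hQ
  have hA0 : 0 ≤ A := le_trans (norm_nonneg _) (hA 0)
  set L := Lc (q^3) with hLdef
  have hL : L ≠ 0 := Lc_ne
  set g : ℤ → ℂ := fun j => (-1 : ℂ)^j * q^(en j) with hg
  set a : ℕ → ℤ → ℂ := fun n j =>
    if j < -(n:ℤ) then 0
    else pq (q^3) n * b (q^3) (2*n) (j + n).toNat * ((-1:ℂ)^j * q^(en j)) with ha
  -- norm of the sign-and-power factor
  have hnorm_g : ∀ j : ℤ, ‖(-1:ℂ)^j * q^(en j)‖ = ‖q‖^(en j) := by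
    intro j
    rw [norm_mul, norm_zpow, norm_neg, norm_one, one_zpow, one_mul, norm_pow]
  -- Step 1 : tsum of `a n` is the finite sum in `Tn`
  have step1 : ∀ n : ℕ, ∑' j : ℤ, a n j
      = ∑ s ∈ range (2*n+1), pq (q^3) n * b (q^3) (2*n) s * ((-1)^(s+n) * q^(en ((s:ℤ)-n))) := by
    intro n
    rw [tsum_eq_sum (s := Finset.Icc (-(n:ℤ)) (n:ℤ)) ?van]
    case van =>
      intro j hj
      simp only [Finset.mem_Icc, not_and_or, not_le] at hj
      rcases hj with hj | hj
      · simp only [ha, if_pos hj]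
      · have hb0 : b (q^3) (2*n) (j + n).toNat = 0 := b_eq_zero _ (by omega)
        simp only [ha, if_neg (by omega : ¬ j < -(n:ℤ)), hb0, mul_zero, zero_mul]
    refine Finset.sum_bij' (fun j _ => (j + n).toNat) (fun s _ => (s:ℤ) - n)
      ?_ ?_ ?_ ?_ ?_
    · intro j hj; simp only [Finset.mem_Icc] at hj; simp only [mem_range]; omega
    · intro s hs; simp only [mem_range] at hs; simp only [Finset.mem_Icc]; omega
    · intro j hj; simp only [Finset.mem_Icc] at hj; omega
    · intro s hs; simp only [mem_range] at hs; omega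
    · intro j hj
      simp only [Finset.mem_Icc] at hj
      have hjv : ((j + n).toNat : ℤ) - n = j := by omega
      simp only [ha, if_neg (by omega : ¬ j < -(n:ℤ)), hjv]
      rw [← zsign ((j + n).toNat) n, hjv]
  -- Step 2 : uniform bound
  have step2 : ∀ (n : ℕ) (j : ℤ), ‖a n j‖ ≤ A*A/(B*B) * ‖q‖^(en j) := by
    intro n j
    have hpos : (0:ℝ) ≤ A*A/(B*B) * ‖q‖^(en j) := by positivity
    by_cases h1 : j < -(n:ℤ)
    · simp only [ha, if_pos h1, norm_zero]; exact hpos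
    · by_cases h2 : (j + n).toNat ≤ 2*n
      · have hb : b (q^3) (2*n) ((j+n).toNat)
            = pq (q^3) (2*n) / (pq (q^3) ((j+n).toNat) * pq (q^3) (2*n - (j+n).toNat)) := by
          rw [eq_div_iff (mul_ne_zero (pq_ne hQ _) (pq_ne hQ _))]
          exact b_mul_pq (q^3) (2*n) _ h2
        simp only [ha, if_neg h1, hb]
        rw [norm_mul, hnorm_g, norm_mul, norm_div, norm_mul]
        apply mul_le_mul_of_nonneg_right _ (pow_nonneg (norm_nonneg q) _)
        rw [mul_div_assoc']
        exact div_le_div₀ (mul_nonneg hA0 hA0)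
          (mul_le_mul (hA _) (hA _) (norm_nonneg _) hA0)
          (mul_pos hB0 hB0)
          (mul_le_mul (hB _) (hB _) hB0.le (norm_nonneg _))
      · have hb0 : b (q^3) (2*n) ((j+n).toNat) = 0 := b_eq_zero _ (by omega)
        simp only [ha, if_neg h1, hb0, mul_zero, zero_mul, norm_zero]
        exact hpos
  -- Step 3 : pointwise convergence
  have step3 : ∀ j : ℤ, Tendsto (fun n => a n j) atTop (𝓝 (g j)) := by
    intro j
    have t1 : Tendsto (fun n : ℕ => (j + n).toNat) atTop atTop :=
      tendsto_atTop.2 fun m => eventually_atTop.2 ⟨m + j.natAbs + 1, fun n hn => by omega⟩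
    have t2 : Tendsto (fun n : ℕ => 2*n - (j + n).toNat) atTop atTop :=
      tendsto_atTop.2 fun m => eventually_atTop.2 ⟨m + j.natAbs + 1, fun n hn => by omega⟩
    have t3 : Tendsto (fun n : ℕ => 2*n) atTop atTop :=
      tendsto_atTop.2 fun m => eventually_atTop.2 ⟨m + 1, fun n hn => by omega⟩
    have hquot : Tendsto (fun n => pq (q^3) n * pq (q^3) (2*n)
        / (pq (q^3) ((j+n).toNat) * pq (q^3) (2*n - (j+n).toNat))) atTop (𝓝 (L*L/(L*L))) :=
      Tendsto.div ((tendsto_pq hQ).mul ((tendsto_pq hQ).comp t3))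
        (((tendsto_pq hQ).comp t1).mul ((tendsto_pq hQ).comp t2)) (mul_ne_zero hL hL)
    rw [div_self (mul_ne_zero hL hL)] at hquot
    have hev : (fun n : ℕ => a n j)
        =ᶠ[atTop] (fun n : ℕ => pq (q^3) n * pq (q^3) (2*n)
          / (pq (q^3) ((j+n).toNat) * pq (q^3) (2*n - (j+n).toNat)) * g j) := by
      filter_upwards [eventually_ge_atTop j.natAbs] with n hn
      have h1 : ¬ j < -(n:ℤ) := by omega
      have h2 : (j + n).toNat ≤ 2*n := by omega
      have hb : b (q^3) (2*n) ((j+n).toNat)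
          = pq (q^3) (2*n) / (pq (q^3) ((j+n).toNat) * pq (q^3) (2*n - (j+n).toNat)) := by
        rw [eq_div_iff (mul_ne_zero (pq_ne hQ _) (pq_ne hQ _))]
        exact b_mul_pq (q^3) (2*n) _ h2
      simp only [ha, if_neg h1, hb, hg]
      ring
    have := (hquot.mul_const (g j)).congr' hev.symm
    rwa [one_mul] at this
  -- Tannery
  have tann := tendsto_tsum_of_dominated_convergence
    (summable_bound (C := A*A/(B*B)) (norm_nonneg q) hq) step3 (Eventually.of_forall step2)
  -- identify the sequence with partial products
  have hseq : (fun n : ℕ => ∑' j : ℤ, a n j) = fun n => ∏ k ∈ range (3*n), (1 - q^(k+1)) := by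
    funext n
    rw [step1 n, ← Tn hq0 n]
  rw [hseq] at tann
  have hprod : Tendsto (fun n : ℕ => ∏ k ∈ range (3*n), (1 - q^(k+1))) atTop
      (𝓝 (Lc q)) := by
    have t3 : Tendsto (fun n : ℕ => 3*n) atTop atTop :=
      tendsto_atTop.2 fun m => eventually_atTop.2 ⟨m + 1, fun n hn => by omega⟩
    exact (tendsto_pq hq).comp t3
  have hfinal : (∑' j : ℤ, g j) = Lc q := tendsto_nhds_unique tann hprod
  rw [fC_eq_tsum_g, tprod_eq_Lc hq]
  exact hfinal


lemma en_pos {j : ℤ} (hj : j ≠ 0) : 0 < en j := by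
  have h2 : 0 < 2*((en j):ℤ) := by
    rw [en_cast]
    rcases lt_or_gt_of_ne hj with h | h
    · exact mul_pos_of_neg_of_neg h (by omega)
    · exact mul_pos h (by omega)
  omega

end Pent

/-- Ramanujan's theta function `f(-q) = ∑_{n ∈ ℤ} (-1)^n q^(n(3n-1)/2)`. -/
noncomputable def fC (q : ℂ) : ℂ := ∑' n : ℤ, (-1 : ℂ) ^ n * q ^ (n * (3 * n - 1) / 2).toNat

theorem pentagonal_product (q : ℂ) (hq : ‖q‖ < 1) :
    fC q = ∏' k : ℕ, (1 - q ^ (k + 1)) := by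
  have hexp : ∀ n : ℤ, (n * (3 * n - 1) / 2).toNat = Pent.en (-n) := by
    intro n
    unfold Pent.en
    congr 2
    ring
  by_cases hq0 : q = 0
  · subst hq0
    rw [fC]
    rw [tsum_eq_single (0 : ℤ) ?_]
    · norm_num
    · intro n hn
      rw [hexp n, zero_pow (by have := Pent.en_pos (neg_ne_zero.2 hn); omega), mul_zero]
  · exact Pent.main hq hq0
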